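/- Let P, Q : ℂ² → ℂ² be polynomial maps with J(P) identically equal to 1 and P ∘ Q = P. Then Q has finite order: there exists a positive integer t ≥ 1 such that the t-fold composition Qᵗ = Q ∘ Q ∘ ⋯ ∘ Q (t times) is the identity map. -/

import Mathlib

open MvPolynomial

abbrev R2 := MvPolynomial (Fin 2) ℂ
abbrev L2 := FractionRing R2

noncomputable def iota : R2 →ₐ[ℂ] L2 := IsScalarTower.toAlgHom ℂ R2 L2

lemma iota_injective : Function.Injective iota :=
  IsFractionRing.injective R2 L2

lemma chain_rule (G : Fin 2 → MvPolynomial (Fin 2) ℂ) (f : MvPolynomial (Fin 2) ℂ) (j : Fin 2) :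
    pderiv j (aeval G f) = ∑ k, aeval G (pderiv k f) * pderiv j (G k) := by
  induction f using MvPolynomial.induction_on with
  | C a => simp
  | add p q hp hq =>
    simp only [map_add, hp, hq, Fin.sum_univ_two]
    ring
  | mul_X p i hp =>
    have e0 : (pderiv j) (aeval G (p * X i))
        = pderiv j (aeval G p) * G i + aeval G p * pderiv j (G i) := by
      rw [map_mul, aeval_X, pderiv_mul]
    rw [e0, hp, Fin.sum_univ_two, Fin.sum_univ_two]
    fin_cases i <;>
      · simp only [pderiv_mul, pderiv_X, Pi.single_apply, map_add, map_mul, aeval_X]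
        norm_num
        ring

lemma coeff_pderiv (i : Fin 2) (m : Fin 2 →₀ ℕ) (p : MvPolynomial (Fin 2) ℂ) :
    coeff m (pderiv i p) = ((m i : ℂ) + 1) * coeff (m + Finsupp.single i 1) p := by
  induction p using MvPolynomial.induction_on' with
  | add p q hp hq => simp [hp, hq, mul_add]
  | monomial s a =>
    rw [pderiv_monomial, coeff_monomial, coeff_monomial]
    by_cases h : s = m + Finsupp.single i 1
    · subst h
      simp [add_tsub_cancel_right, mul_comm]
    · rw [if_neg h, mul_zero]
      by_cases h2 : s - Finsupp.single i 1 = m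
      · by_cases h3 : s i = 0
        · simp [h2, h3]
        · exfalso; apply h
          rw [← h2]
          ext k
          simp only [Finsupp.add_apply, Finsupp.tsub_apply, Finsupp.single_apply]
          rcases eq_or_ne i k with rfl | hik
          · simp; omega
          · simp [hik]
      · rw [if_neg h2]

lemma sum_add_single (m : Fin 2 →₀ ℕ) (i : Fin 2) :
    ((m + Finsupp.single i 1).sum fun _ e => e) = (m.sum fun _ e => e) + 1 := by
  rw [Finsupp.sum_add_index' (fun _ => rfl) (fun _ _ _ => rfl), Finsupp.sum_single_index rfl]

lemma mem_support_of_pderiv {i : Fin 2} {m : Fin 2 →₀ ℕ} {p : MvPolynomial (Fin 2) ℂ}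
    (h : m ∈ (pderiv i p).support) : m + Finsupp.single i 1 ∈ p.support := by
  rw [mem_support_iff] at h ⊢
  intro hc
  apply h
  rw [coeff_pderiv, hc, mul_zero]

lemma td_pderiv_lt {i : Fin 2} {p : MvPolynomial (Fin 2) ℂ} (h : pderiv i p ≠ 0) :
    (pderiv i p).totalDegree < p.totalDegree := by
  rw [totalDegree, Finset.sup_lt_iff]
  · intro m hm
    have h1 := le_totalDegree (mem_support_of_pderiv hm)
    rw [sum_add_single] at h1
    omega
  · obtain ⟨m, hm⟩ := (pderiv i p).support.nonempty_of_ne_empty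
      (fun hc => h (support_eq_empty.mp hc))
    have h1 := le_totalDegree (mem_support_of_pderiv hm)
    rw [sum_add_single] at h1
    exact lt_of_lt_of_le (Nat.succ_pos _) h1

lemma eq_C_of_pderiv_eq_zero {p : MvPolynomial (Fin 2) ℂ} (h : ∀ i, pderiv i p = 0) :
    p = C (coeff 0 p) := by
  ext m
  rcases eq_or_ne m 0 with rfl | hm
  · simp
  · rw [coeff_C, if_neg (Ne.symm hm)]
    obtain ⟨i, hi⟩ : ∃ i, m i ≠ 0 := by
      by_contra hc
      push_neg at hc
      exact hm (Finsupp.ext hc)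
    have h2 : (m - Finsupp.single i 1) + Finsupp.single i 1 = m := by
      ext k
      simp only [Finsupp.add_apply, Finsupp.tsub_apply, Finsupp.single_apply]
      rcases eq_or_ne i k with rfl | hik
      · simp; omega
      · simp [hik]
    have h3 := coeff_pderiv i (m - Finsupp.single i 1) p
    rw [h i, h2] at h3
    have := (mul_eq_zero.mp h3.symm).resolve_left (Nat.cast_add_one_ne_zero _)
    simpa using this

lemma aeval_eq_zero_of_det {v : Fin 2 → MvPolynomial (Fin 2) ℂ}
    (hdet : IsUnit (Matrix.of fun i j : Fin 2 => pderiv j (v i)).det) :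
    ∀ p : MvPolynomial (Fin 2) ℂ, aeval v p = 0 → p = 0 := by
  set N := Matrix.of fun i j : Fin 2 => pderiv j (v i) with hN
  have key : ∀ p : MvPolynomial (Fin 2) ℂ, aeval v p = 0 → ∀ k, aeval v (pderiv k p) = 0 := by
    intro p hp
    have hu : Matrix.vecMul (fun k => aeval v (pderiv k p)) N = 0 := by
      funext j
      have h0 : pderiv j (aeval v p) = 0 := by rw [hp, map_zero]
      rw [chain_rule] at h0
      simpa [Matrix.vecMul, dotProduct, hN] using h0
    have h2 := congrArg (fun w => Matrix.vecMul w N⁻¹) hu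
    simp only [Matrix.vecMul_vecMul, Matrix.mul_nonsing_inv _ hdet, Matrix.vecMul_one,
      Matrix.zero_vecMul] at h2
    exact fun k => congrFun h2 k
  suffices H : ∀ (n : ℕ) (p : MvPolynomial (Fin 2) ℂ), p.totalDegree ≤ n → aeval v p = 0 → p = 0 by
    exact fun p hp => H p.totalDegree p le_rfl hp
  intro n
  induction n using Nat.strong_induction_on with
  | _ n ih =>
    intro p hd hp
    have hder : ∀ k, pderiv k p = 0 := by
      intro k
      by_cases hz : pderiv k p = 0
      · exact hz
      · exact ih _ (lt_of_lt_of_le (td_pderiv_lt hz) hd) _ le_rfl (key p hp k)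
    have hc := eq_C_of_pderiv_eq_zero hder
    rw [hc] at hp ⊢
    rw [aeval_C] at hp
    simpa using hp

noncomputable def gmon (N : ℕ) : Fin (N+1) × Fin (N+1) → MvPolynomial (Fin 2) ℂ :=
  fun s => monomial (Finsupp.single (0 : Fin 2) (s.1 : ℕ) + Finsupp.single (1 : Fin 2) (s.2 : ℕ))
    (1 : ℂ)

lemma mem_span_monomials {N : ℕ} {p : MvPolynomial (Fin 2) ℂ} (hp : p.totalDegree ≤ N) :
    p ∈ Submodule.span ℂ (Set.range (gmon N)) := by
  rw [p.as_sum]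
  apply Submodule.sum_mem
  intro m hm
  have hsum : (m.sum fun _ e => e) = m 0 + m 1 := by
    rw [Finsupp.sum_fintype _ _ (fun _ => rfl), Fin.sum_univ_two]
  have hle := le_totalDegree hm
  rw [hsum] at hle
  have h0 : m 0 < N + 1 := by omega
  have h1 : m 1 < N + 1 := by omega
  have hm' : m = Finsupp.single 0 (m 0) + Finsupp.single 1 (m 1) := by
    ext k
    fin_cases k <;> simp [Finsupp.single_apply]
  have h2 : monomial m (coeff m p) = coeff m p • monomial m (1:ℂ) := by
    rw [smul_monomial, smul_eq_mul, mul_one]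
  rw [h2]
  apply Submodule.smul_mem
  apply Submodule.subset_span
  refine ⟨(⟨m 0, h0⟩, ⟨m 1, h1⟩), ?_⟩
  show monomial _ _ = _
  rw [← hm']

set_option maxHeartbeats 1000000 in
lemma three_dependent (v : Fin 3 → MvPolynomial (Fin 2) ℂ) : ¬ AlgebraicIndependent ℂ v := by
  intro h
  have hinj : Function.Injective (aeval v : MvPolynomial (Fin 3) ℂ →ₐ[ℂ] MvPolynomial (Fin 2) ℂ) :=
    algebraicIndependent_iff_injective_aeval.mp h
  set E := (v 0).totalDegree + (v 1).totalDegree + (v 2).totalDegree + 1 with hE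
  set n := 4 * E ^ 2 + 1 with hn
  set N := n * E with hNdef
  set d : Fin n × Fin n × Fin n → (Fin 3 →₀ ℕ) := fun t =>
    Finsupp.single (0 : Fin 3) (t.1 : ℕ) + Finsupp.single (1 : Fin 3) (t.2.1 : ℕ)
      + Finsupp.single (2 : Fin 3) (t.2.2 : ℕ) with hd
  have hdapp : ∀ t, (d t) 0 = (t.1 : ℕ) ∧ (d t) 1 = (t.2.1 : ℕ) ∧ (d t) 2 = (t.2.2 : ℕ) := by
    intro t
    refine ⟨?_, ?_, ?_⟩ <;> simp [hd, Finsupp.single_apply]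
  have hdinj : Function.Injective d := by
    intro s t hst
    obtain ⟨a1, b1, c1⟩ := hdapp s
    obtain ⟨a2, b2, c2⟩ := hdapp t
    rw [hst] at a1 b1 c1
    ext
    · exact a1.symm.trans a2
    · exact b1.symm.trans b2
    · exact c1.symm.trans c2
  have hmono : ∀ t, monomial (d t) (1:ℂ) =
      X 0 ^ (t.1 : ℕ) * X 1 ^ (t.2.1 : ℕ) * X 2 ^ (t.2.2 : ℕ) := by
    intro t
    rw [X_pow_eq_monomial, X_pow_eq_monomial, X_pow_eq_monomial, monomial_mul, monomial_mul]
    simp [hd]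
  have li0 : LinearIndependent ℂ fun t => aeval v (monomial (d t) (1:ℂ)) := by
    have lib := ((basisMonomials (Fin 3) ℂ).linearIndependent.comp d hdinj).map'
      (aeval v).toLinearMap (LinearMap.ker_eq_bot.mpr hinj)
    simpa [coe_basisMonomials, Function.comp_def] using lib
  have hmem : ∀ t, aeval v (monomial (d t) (1:ℂ)) ∈ Submodule.span ℂ (Set.range (gmon N)) := by
    intro t
    apply mem_span_monomials
    rw [hmono, map_mul, map_mul, map_pow, map_pow, map_pow, aeval_X, aeval_X, aeval_X]
    have b1 : (v 0 ^ (t.1:ℕ)).totalDegree ≤ (t.1:ℕ) * (v 0).totalDegree := totalDegree_pow _ _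
    have b2 : (v 1 ^ (t.2.1:ℕ)).totalDegree ≤ (t.2.1:ℕ) * (v 1).totalDegree := totalDegree_pow _ _
    have b3 : (v 2 ^ (t.2.2:ℕ)).totalDegree ≤ (t.2.2:ℕ) * (v 2).totalDegree := totalDegree_pow _ _
    have hb := le_trans (totalDegree_mul _ _)
      (add_le_add (le_trans (totalDegree_mul _ _) (add_le_add b1 b2)) b3)
    have ht1 : (t.1 : ℕ) < n := t.1.isLt
    have ht2 : (t.2.1 : ℕ) < n := t.2.1.isLt
    have ht3 : (t.2.2 : ℕ) < n := t.2.2.isLt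
    have hfin : (t.1:ℕ) * (v 0).totalDegree + (t.2.1:ℕ) * (v 1).totalDegree
        + (t.2.2:ℕ) * (v 2).totalDegree ≤ N := by
      rw [hNdef, hE]
      nlinarith [Nat.zero_le ((v 0).totalDegree), Nat.zero_le ((v 1).totalDegree),
        Nat.zero_le ((v 2).totalDegree)]
    omega
  haveI : Module.Finite ℂ (Submodule.span ℂ (Set.range (gmon N))) :=
    Module.Finite.span_of_finite ℂ (Set.finite_range _)
  have li : LinearIndependent ℂ fun t =>
      (⟨aeval v (monomial (d t) (1:ℂ)), hmem t⟩ : Submodule.span ℂ (Set.range (gmon N))) := by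
    apply LinearIndependent.of_comp (Submodule.span ℂ (Set.range (gmon N))).subtype
    exact li0
  have hcard := li.fintype_card_le_finrank
  have hrank : Module.finrank ℂ (Submodule.span ℂ (Set.range (gmon N))) ≤ (N+1) * (N+1) := by
    refine le_trans (finrank_span_le_card (R := ℂ) (Set.range (gmon N))) ?_
    rw [Set.toFinset_range]
    refine le_trans (Finset.card_image_le) ?_
    simp
  rw [Fintype.card_prod, Fintype.card_prod, Fintype.card_fin] at hcard
  have hEpos : 1 ≤ E := by omega
  have hfin : n * (n * n) ≤ (N+1) * (N+1) := le_trans hcard hrank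
  rw [hNdef, hn] at hfin
  nlinarith [hEpos, hfin]

lemma eval_aeval' (G : Fin 2 → MvPolynomial (Fin 2) ℂ) (z : Fin 2 → ℂ)
    (p : MvPolynomial (Fin 2) ℂ) :
    eval z (aeval G p) = eval (fun j => eval z (G j)) p := by
  rw [aeval_eq_bind₁, hom_bind₁]
  exact eval₂Hom_congr (by ext a; simp) rfl rfl

lemma eval₂_finSuccEquiv (v0 : MvPolynomial (Fin 2) ℂ) (vs : Fin 2 → MvPolynomial (Fin 2) ℂ)
    (p : MvPolynomial (Fin 3) ℂ) :
    Polynomial.eval₂ ((aeval vs : MvPolynomial (Fin 2) ℂ →ₐ[ℂ] MvPolynomial (Fin 2) ℂ)).toRingHom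
        v0 (finSuccEquiv ℂ 2 p)
      = aeval (Fin.cons v0 vs) p := by
  have h : (Polynomial.eval₂RingHom ((aeval vs : MvPolynomial (Fin 2) ℂ →ₐ[ℂ] MvPolynomial (Fin 2) ℂ)).toRingHom v0).comp
      ((finSuccEquiv ℂ 2) : MvPolynomial (Fin 3) ℂ →+* Polynomial (MvPolynomial (Fin 2) ℂ))
      = ((aeval (Fin.cons v0 vs) : MvPolynomial (Fin 3) ℂ →ₐ[ℂ] MvPolynomial (Fin 2) ℂ) :
        MvPolynomial (Fin 3) ℂ →+* MvPolynomial (Fin 2) ℂ) := by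
    apply ringHom_ext
    · intro a
      simp [finSuccEquiv_apply, algebraMap_eq]
    · intro i
      refine Fin.cases ?_ ?_ i
      · simp [finSuccEquiv_X_zero]
      · intro j
        simp [finSuccEquiv_X_succ]
  exact congrFun (congrArg (fun f => f.toFun) h) p

lemma isAlgebraic_over_adjoin (x : R2) (F : Fin 2 → R2) (hF : AlgebraicIndependent ℂ F) :
    IsAlgebraic (IntermediateField.adjoin ℂ (Set.range fun i => iota (F i))) (iota x) := by
  set K := IntermediateField.adjoin ℂ (Set.range fun i => iota (F i)) with hK
  set FK : Fin 2 → K := fun i => ⟨iota (F i),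
    IntermediateField.subset_adjoin ℂ _ ⟨i, rfl⟩⟩ with hFK
  have hdep := three_dependent (Fin.cons x F)
  rw [algebraicIndependent_iff] at hdep
  push_neg at hdep
  obtain ⟨p, hp0, hpne⟩ := hdep
  set q := finSuccEquiv ℂ 2 p with hq
  have hqne : q ≠ 0 := by
    intro hc
    exact hpne ((finSuccEquiv ℂ 2).injective (by rw [← hq, hc, map_zero]))
  set sK : MvPolynomial (Fin 2) ℂ →+* K := (aeval FK : MvPolynomial (Fin 2) ℂ →ₐ[ℂ] K).toRingHom
    with hsK
  set sF : MvPolynomial (Fin 2) ℂ →+* R2 := (aeval F : MvPolynomial (Fin 2) ℂ →ₐ[ℂ] R2).toRingHom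
    with hsF
  have hcomp : (K.val.comp (aeval FK : MvPolynomial (Fin 2) ℂ →ₐ[ℂ] K))
      = iota.comp (aeval F) := by
    apply algHom_ext
    intro i
    simp [hFK]
  have hFKinj : Function.Injective (aeval FK : MvPolynomial (Fin 2) ℂ →ₐ[ℂ] K) := by
    have h1 : Function.Injective (⇑K.val ∘ ⇑(aeval FK : MvPolynomial (Fin 2) ℂ →ₐ[ℂ] K)) := by
      rw [← AlgHom.coe_comp, hcomp]
      rw [AlgHom.coe_comp]
      exact iota_injective.comp hF
    exact Function.Injective.of_comp h1
  refine ⟨q.map sK, ?_, ?_⟩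
  · intro hc
    exact hqne ((Polynomial.map_eq_zero_iff (f := sK) hFKinj).mp hc)
  · have h2 : (algebraMap K L2).comp sK = iota.toRingHom.comp sF := by
      have h3 := congrArg (AlgHom.toRingHom) hcomp
      exact h3
    have h4 : Polynomial.aeval (iota x) (q.map sK)
        = Polynomial.eval₂ ((algebraMap K L2).comp sK) (iota x) q := by
      rw [Polynomial.aeval_def, Polynomial.eval₂_map]
    have h5 : Polynomial.eval₂ (iota.toRingHom.comp sF) (iota.toRingHom x) q
        = iota.toRingHom (Polynomial.eval₂ sF x q) := (Polynomial.hom_eval₂ _ _ _ _).symm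
    have h6 : Polynomial.eval₂ sF x q = 0 := by
      rw [hsF, hq, eval₂_finSuccEquiv, hp0]
    rw [h4, h2]
    have h7 : iota.toRingHom x = iota x := rfl
    rw [← h7] at *
    rw [h5, h6, map_zero]

set_option maxHeartbeats 2000000 in
set_option synthInstance.maxHeartbeats 1000000 in
theorem finite_order_of_comp_eq_self
    (F G : Fin 2 → MvPolynomial (Fin 2) ℂ)
    (hJ : (Matrix.of fun i j : Fin 2 => MvPolynomial.pderiv j (F i)).det = 1)
    (hPQ : ∀ z : Fin 2 → ℂ,
      (fun i => eval (fun j => eval z (G j)) (F i)) = fun i => eval z (F i)) :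
    ∃ t : ℕ, 1 ≤ t ∧
      (fun z : Fin 2 → ℂ => fun i => eval z (G i))^[t] = id := by
  classical
  -- Step 1 : composition identity on the level of polynomials
  have hFG : ∀ i, aeval G (F i) = F i := by
    intro i
    apply MvPolynomial.funext
    intro z
    rw [eval_aeval' G z (F i)]
    exact congrFun (hPQ z) i
  -- Step 2 : Jacobian of G
  set M : Matrix (Fin 2) (Fin 2) R2 := Matrix.of fun i j => pderiv j (F i) with hM
  set N : Matrix (Fin 2) (Fin 2) R2 := Matrix.of fun i j => pderiv j (G i) with hN
  have hMN : M = (M.map (aeval G)) * N := by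
    apply Matrix.ext
    intro i j
    rw [Matrix.mul_apply]
    have : M i j = pderiv j (aeval G (F i)) := by rw [hFG]; rfl
    rw [this, chain_rule]
    apply Finset.sum_congr rfl
    intro k _
    simp [hM, hN, Matrix.map_apply]
  have hJG : N.det = 1 := by
    have h1 : M.det = (M.map (aeval G)).det * N.det := by rw [← Matrix.det_mul, ← hMN]
    have h2 : (M.map ⇑(aeval G : R2 →ₐ[ℂ] R2)).det
        = (aeval G : R2 →ₐ[ℂ] R2).toRingHom M.det := ((aeval G : R2 →ₐ[ℂ] R2).toRingHom.map_det M).symm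
    rw [hJ] at h1
    rw [h2, hJ] at h1
    simpa using h1.symm
  -- Step 3 : algebraic independence
  have hFind : AlgebraicIndependent ℂ F :=
    algebraicIndependent_iff.mpr (aeval_eq_zero_of_det (hJ ▸ isUnit_one))
  have hGind : AlgebraicIndependent ℂ G :=
    algebraicIndependent_iff.mpr (aeval_eq_zero_of_det (hJG ▸ isUnit_one))
  -- Step 4 : the endomorphism of the fraction field
  set σ₀ : R2 →ₐ[ℂ] R2 := aeval G with hσ₀
  have hσinj : Function.Injective σ₀ := algebraicIndependent_iff_injective_aeval.mp hGind
  have hg : Function.Injective (iota.toRingHom.comp σ₀.toRingHom) := by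
    exact iota_injective.comp hσinj
  set σL : L2 →+* L2 := IsFractionRing.lift hg with hσL
  have hcommσ : ∀ r : R2, σL (iota r) = iota (σ₀ r) := fun r =>
    IsFractionRing.lift_algebraMap hg r
  -- Step 5 : the fixed intermediate field
  set K := IntermediateField.adjoin ℂ (Set.range fun i => iota (F i)) with hK
  have halgC : ∀ c : ℂ, algebraMap ℂ L2 c = iota (C c) := by
    intro c
    rw [IsScalarTower.algebraMap_apply ℂ R2 L2]
    rfl
  have hfix : ∀ x ∈ K, σL x = x := by
    intro x hx
    induction hx using IntermediateField.adjoin_induction with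
    | mem x hx =>
      obtain ⟨i, rfl⟩ := hx
      rw [hcommσ, hσ₀]
      rw [hFG]
    | algebraMap c => rw [halgC c, hcommσ]; simp [hσ₀]
    | add x y hx hy ihx ihy => rw [map_add, ihx, ihy]
    | inv x hx ihx => rw [map_inv₀, ihx]
    | mul x y hx hy ihx ihy => rw [map_mul, ihx, ihy]
  -- Step 6 : finite dimensionality
  haveI hKfd : FiniteDimensional K L2 := by
    have alg0 : IsIntegral K (iota (X 0)) :=
      (isAlgebraic_over_adjoin (X 0) F hFind).isIntegral
    have alg1 : IsIntegral K (iota (X 1)) :=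
      (isAlgebraic_over_adjoin (X 1) F hFind).isIntegral
    have hS : ∀ x ∈ ({iota (X 0), iota (X 1)} : Set L2), IsIntegral K x := by
      rintro x (rfl | rfl)
      · exact alg0
      · exact alg1
    haveI : Finite ({iota (X 0), iota (X 1)} : Set L2) :=
      ((Set.finite_singleton _).insert _).to_subtype
    haveI hfd2 : FiniteDimensional K
        (IntermediateField.adjoin K ({iota (X 0), iota (X 1)} : Set L2)) :=
      IntermediateField.finiteDimensional_adjoin hS
    have htop : IntermediateField.adjoin K ({iota (X 0), iota (X 1)} : Set L2) = ⊤ := by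
      rw [eq_top_iff]
      intro z _
      have hR : ∀ r : R2, iota r ∈
          IntermediateField.adjoin K ({iota (X 0), iota (X 1)} : Set L2) := by
        intro r
        induction r using MvPolynomial.induction_on with
        | C c =>
          rw [← halgC c]
          have : algebraMap ℂ L2 c = algebraMap K L2 ⟨algebraMap ℂ L2 c, K.algebraMap_mem c⟩ :=
            rfl
          rw [this]
          exact IntermediateField.algebraMap_mem _ _
        | add p q hp hq => rw [map_add]; exact add_mem hp hq
        | mul_X p i hp =>
          rw [map_mul]
          refine mul_mem hp (IntermediateField.subset_adjoin _ _ ?_)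
          fin_cases i
          · exact Set.mem_insert _ _
          · exact Set.mem_insert_of_mem _ rfl
      obtain ⟨r, s, hs, rfl⟩ := IsFractionRing.div_surjective (A := R2) z
      exact div_mem (hR r) (hR s)
    rw [htop] at hfd2
    exact Module.Finite.equiv (IntermediateField.topEquiv (F := K) (E := L2)).toLinearEquiv
  -- Step 7 : the automorphism
  set τ : L2 →ₐ[K] L2 :=
    { toRingHom := σL, commutes' := fun k => hfix k k.2 } with hτ
  have hτinj : Function.Injective τ := τ.toRingHom.injective
  have hτbij : Function.Bijective τ :=
    ⟨hτinj, (LinearMap.injective_iff_surjective (f := τ.toLinearMap)).mp hτinj⟩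
  set e : L2 ≃ₐ[K] L2 := AlgEquiv.ofBijective τ hτbij with he
  -- Step 8 : finite order
  haveI : Fintype (L2 ≃ₐ[K] L2) := AlgEquiv.fintype K L2
  set t := orderOf e with ht
  have ht1 : 1 ≤ t := orderOf_pos e
  have het : e ^ t = 1 := pow_orderOf_eq_one e
  -- Step 9 : iterates
  have hpow : ∀ (n : ℕ) (z : L2), (e ^ n) z = (⇑σL)^[n] z := by
    intro n
    induction n with
    | zero => intro z; simp
    | succ n ih =>
      intro z
      rw [pow_succ, Function.iterate_succ_apply]
      have : (e ^ n * e) z = (e ^ n) (e z) := rfl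
      rw [this, ih]
      rfl
  have hσLt : ∀ z : L2, (⇑σL)^[t] z = z := by
    intro z
    rw [← hpow, het]
    rfl
  have hiter : ∀ (n : ℕ) (r : R2), (⇑σL)^[n] (iota r) = iota ((⇑σ₀)^[n] r) := by
    intro n
    induction n with
    | zero => intro r; rfl
    | succ n ih =>
      intro r
      rw [Function.iterate_succ_apply, Function.iterate_succ_apply, hcommσ, ih]
  have hXfix : ∀ i : Fin 2, (⇑σ₀)^[t] (X i) = X i := by
    intro i
    apply iota_injective
    rw [← hiter, hσLt]
  -- Step 10 : conclusion
  refine ⟨t, ht1, ?_⟩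
  have key : ∀ (n : ℕ) (z : Fin 2 → ℂ) (i : Fin 2),
      ((fun z : Fin 2 → ℂ => fun i => eval z (G i))^[n] z) i = eval z ((⇑σ₀)^[n] (X i)) := by
    intro n
    induction n with
    | zero => intro z i; simp
    | succ n ih =>
      intro z i
      rw [Function.iterate_succ_apply, ih, Function.iterate_succ_apply']
      rw [hσ₀]
      rw [eval_aeval' G z ((⇑σ₀)^[n] (X i))]
  funext z
  ext i
  rw [key t z i, hXfix i, eval_X]
  rfl
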